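/- Let θ₁ ∈ [0,1), let k ≥ 1, and let F₁ be a k-dimensional ℂ-linear subspace of V(θ₁). For every ε > 0 there exists δ > 0 such that for every θ₂ ∈ [0,1) with |θ₂ − θ₁| ≤ δ there exists a k-dimensional ℂ-linear subspace F₂ of V(θ₂) with max( dist(F₁,F₂), dist(F₂,F₁) ) < ε, where dist(N,M) := sup over u ∈ N with ‖u‖_{H¹} = 1 of inf over v ∈ M of ‖u − v‖_{H¹}, and ‖u‖_{H¹}² := ∫₀¹ |u|² + ∫₀¹ |u'|². -/

import Mathlib

open MeasureTheory Real Set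
open scoped ComplexConjugate

noncomputable section

/-- `u ∈ H¹(0,1)` with (weak) derivative `u'`. -/
def IsH1 (u u' : ℝ → ℂ) : Prop :=
  MemLp u' 2 (volume.restrict (Ioo (0:ℝ) 1)) ∧
  ∀ x ∈ Icc (0:ℝ) 1, u x = u 0 + ∫ t in (0:ℝ)..x, u' t

/-- The set `V(θ)` of `θ`-quasiperiodic `H¹(0,1)` functions whose derivative
vanishes a.e. on `Q₁ = (0,α) ∪ (β,1)`. -/
def VSet (α β θ : ℝ) : Set (ℝ → ℂ) :=
  {u | ∃ u' : ℝ → ℂ, IsH1 u u' ∧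
    u 1 = Complex.exp (2 * Real.pi * Complex.I * θ) * u 0 ∧
    ∀ᵐ y ∂volume, y ∈ Ioo (0:ℝ) α ∪ Ioo β 1 → u' y = 0}

/-- The squared `H¹(0,1)` norm, `∫₀¹ |u|² + ∫₀¹ |u'|²` (for `H¹` functions the
classical derivative exists a.e. and coincides with the weak derivative). -/
def H1NormSq (u : ℝ → ℂ) : ℝ :=
  (∫ y in Ioo (0:ℝ) 1, ‖u y‖ ^ 2) + ∫ y in Ioo (0:ℝ) 1, ‖deriv u y‖ ^ 2

/-- `dist(N,M) = sup_{u ∈ N, ‖u‖_{H¹}=1} inf_{v ∈ M} ‖u − v‖_{H¹}`. -/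
def distS (Nn Mm : Set (ℝ → ℂ)) : ℝ :=
  sSup {r : ℝ | ∃ u ∈ Nn, H1NormSq u = 1 ∧
    r = sInf {s : ℝ | ∃ v ∈ Mm, s = Real.sqrt (H1NormSq (u - v))}}

namespace Stmt15Aux

/-- The derivative of the phase-correction bump: `(β-α)⁻¹` on `(α,β)`, `0` elsewhere. -/
def rho (α β : ℝ) : ℝ → ℂ := (Ioo α β).indicator fun _ => (((β - α)⁻¹ : ℝ) : ℂ)

/-- The phase-correction bump: primitive of `rho`. -/
def psi (α β : ℝ) (x : ℝ) : ℂ := ∫ t in (0:ℝ)..x, rho α β t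

variable {α β : ℝ}

lemma integrable_rho : Integrable (rho α β) := by
  unfold rho
  rw [integrable_indicator_iff measurableSet_Ioo]
  exact integrableOn_const measure_Ioo_lt_top.ne enorm_ne_top

lemma intervalIntegrable_rho (a b : ℝ) : IntervalIntegrable (rho α β) volume a b :=
  integrable_rho.intervalIntegrable

lemma psi_zero : psi α β 0 = 0 := intervalIntegral.integral_same

lemma rho_const {y : ℝ} (hy : y ∈ Ioo α β) :
    rho α β y = (((β - α)⁻¹ : ℝ) : ℂ) := by
  unfold rho; rw [indicator_of_mem hy]

lemma rho_eq_zero {y : ℝ} (hy : y ∉ Ioo α β) : rho α β y = 0 := by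
  unfold rho; rw [indicator_of_notMem hy]

lemma psi_one (hα : 0 < α) (hαβ : α < β) (hβ : β < 1) : psi α β 1 = 1 := by
  unfold psi
  rw [intervalIntegral.integral_of_le zero_le_one]
  unfold rho
  rw [setIntegral_indicator measurableSet_Ioo]
  have hsub : Ioc (0:ℝ) 1 ∩ Ioo α β = Ioo α β :=
    inter_eq_self_of_subset_right fun y hy => ⟨hα.trans hy.1, hy.2.le.trans hβ.le⟩
  rw [hsub, setIntegral_const, measureReal_def, Real.volume_Ioo, ENNReal.toReal_ofReal (by linarith),
    Complex.real_smul]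
  push_cast
  rw [mul_inv_cancel₀]
  exact_mod_cast sub_ne_zero.2 hαβ.ne'

lemma norm_psi_le (hαβ : α < β) {x : ℝ} (hx : 0 ≤ x) : ‖psi α β x‖ ≤ 1 := by
  unfold psi
  rw [intervalIntegral.integral_of_le hx]
  have h1 : ‖∫ t in Ioc 0 x, rho α β t‖ ≤ ∫ t in Ioc 0 x, ‖rho α β t‖ :=
    norm_integral_le_integral_norm _
  have h2 : ∀ t, ‖rho α β t‖ = (Ioo α β).indicator (fun _ => ‖(((β - α)⁻¹ : ℝ) : ℂ)‖) t :=
    fun t => norm_indicator_eq_indicator_norm _ _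
  calc ‖∫ t in Ioc 0 x, rho α β t‖ ≤ ∫ t in Ioc 0 x, ‖rho α β t‖ := h1
    _ = ∫ t in Ioc 0 x, (Ioo α β).indicator (fun _ => ‖(((β - α)⁻¹ : ℝ) : ℂ)‖) t := by
        simp_rw [h2]
    _ = ∫ t in Ioc 0 x ∩ Ioo α β, ‖(((β - α)⁻¹ : ℝ) : ℂ)‖ := by
        rw [setIntegral_indicator measurableSet_Ioo]
    _ = (volume (Ioc 0 x ∩ Ioo α β)).toReal * ‖(((β - α)⁻¹ : ℝ) : ℂ)‖ := by
        rw [setIntegral_const, smul_eq_mul, measureReal_def]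
    _ ≤ 1 := by
        have hv : (volume (Ioc 0 x ∩ Ioo α β)).toReal ≤ β - α := by
          have := measure_mono (μ := volume) (inter_subset_right (s := Ioc 0 x) (t := Ioo α β))
          rw [Real.volume_Ioo] at this
          calc (volume (Ioc 0 x ∩ Ioo α β)).toReal ≤ (ENNReal.ofReal (β - α)).toReal :=
                ENNReal.toReal_mono ENNReal.ofReal_ne_top this
            _ = β - α := ENNReal.toReal_ofReal (by linarith)
        have hn : ‖(((β - α)⁻¹ : ℝ) : ℂ)‖ = (β - α)⁻¹ := by
          rw [Complex.norm_real, Real.norm_eq_abs, abs_of_nonneg (inv_nonneg.2 (by linarith))]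
        rw [hn]
        have hba : (0:ℝ) < β - α := by linarith
        calc (volume (Ioc 0 x ∩ Ioo α β)).toReal * (β - α)⁻¹ ≤ (β - α) * (β - α)⁻¹ :=
              mul_le_mul_of_nonneg_right hv (by positivity)
          _ = 1 := mul_inv_cancel₀ hba.ne'

lemma hasDerivAt_psi (hαβ : α < β) {x : ℝ} (hxa : x ≠ α) (hxb : x ≠ β) :
    HasDerivAt (psi α β) (rho α β x) x := by
  apply intervalIntegral.integral_hasDerivAt_right (intervalIntegrable_rho 0 x)
    ((measurable_const.indicator measurableSet_Ioo).stronglyMeasurable.stronglyMeasurableAtFilter)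
  rcases lt_trichotomy x α with h | h | h
  · have hmem : Iio α ∈ nhds x := Iio_mem_nhds h
    have : (fun y => rho α β y) =ᶠ[nhds x] fun _ => (0:ℂ) := by
      filter_upwards [hmem] with y hy
      exact rho_eq_zero (fun hmem' => absurd hmem'.1 (not_lt.2 hy.le).elim)
    exact this.continuousAt
  · exact absurd h hxa
  · rcases lt_trichotomy x β with h' | h' | h'
    · have hmem : Ioo α β ∈ nhds x := Ioo_mem_nhds h h'
      have : (fun y => rho α β y) =ᶠ[nhds x] fun _ => (((β - α)⁻¹ : ℝ) : ℂ) := by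
        filter_upwards [hmem] with y hy
        exact rho_const hy
      exact this.continuousAt
    · exact absurd h' hxb
    · have hmem : Ioi β ∈ nhds x := Ioi_mem_nhds h'
      have : (fun y => rho α β y) =ᶠ[nhds x] fun _ => (0:ℂ) := by
        filter_upwards [hmem] with y hy
        exact rho_eq_zero (fun hmem' => absurd hmem'.2 (not_lt.2 hy.le).elim)
      exact this.continuousAt

/-- interval integrability of the weak derivative -/
lemma intervalIntegrable_of_memL2 {u' : ℝ → ℂ}
    (h : MemLp u' 2 (volume.restrict (Ioo (0:ℝ) 1))) {x : ℝ} (hx : x ∈ Icc (0:ℝ) 1) :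
    IntervalIntegrable u' volume 0 x := by
  have hIoo : IntegrableOn u' (Ioo 0 1) := h.integrable (by norm_num)
  have hsub : Ioc (0:ℝ) x ≤ᵐ[volume] Ioo (0:ℝ) 1 := by
    rw [ae_le_set]
    apply measure_mono_null ?_ (measure_singleton (1:ℝ))
    · intro y hy
      have h1 : 0 < y := hy.1.1
      have h2 : y ≤ x := hy.1.2
      have h3 : ¬(0 < y ∧ y < 1) := hy.2
      have : ¬ y < 1 := fun hlt => h3 ⟨h1, hlt⟩
      have : y = 1 := le_antisymm (h2.trans hx.2) (not_lt.1 this)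
      simp [this]
  rw [intervalIntegrable_iff, uIoc_of_le hx.1]
  exact hIoo.mono_set_ae hsub

/-- main mapping lemma: the phase correction maps `V(θ₁)` into `V(θ₂)` -/
lemma mem_VSet_map (hα : 0 < α) (hαβ : α < β) (hβ : β < 1) (θ₁ θ₂ : ℝ) {u : ℝ → ℂ}
    (hu : u ∈ VSet α β θ₁) :
    (u + (((Complex.exp (2 * Real.pi * Complex.I * θ₂) -
      Complex.exp (2 * Real.pi * Complex.I * θ₁)) * u 0) • psi α β)) ∈ VSet α β θ₂ := by
  obtain ⟨u', ⟨hu'2, hrep⟩, hbd, hae⟩ := hu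
  set c : ℂ := (Complex.exp (2 * Real.pi * Complex.I * θ₂) -
      Complex.exp (2 * Real.pi * Complex.I * θ₁)) * u 0 with hc
  refine ⟨fun y => u' y + c * rho α β y, ⟨?_, ?_⟩, ?_, ?_⟩
  · apply hu'2.add
    haveI : Fact (volume (Ioo (0:ℝ) 1) < ⊤) := ⟨measure_Ioo_lt_top⟩
    apply MemLp.const_mul
    apply MemLp.of_bound ((measurable_const.indicator
      (measurableSet_Ioo)).stronglyMeasurable.aestronglyMeasurable)
      ‖(((β - α)⁻¹ : ℝ) : ℂ)‖
    exact Filter.Eventually.of_forall fun y => norm_indicator_le_norm_self _ y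
  · intro x hx
    have h1 : IntervalIntegrable u' volume 0 x := intervalIntegrable_of_memL2 hu'2 hx
    have h2 : IntervalIntegrable (fun y => c * rho α β y) volume 0 x :=
      (intervalIntegrable_rho 0 x).const_mul c
    simp only [Pi.add_apply, Pi.smul_apply, smul_eq_mul]
    rw [intervalIntegral.integral_add h1 h2, intervalIntegral.integral_const_mul,
      hrep x hx, psi_zero]
    show _ = u 0 + c * 0 + (_ + c * psi α β x)
    ring
  · simp only [Pi.add_apply, Pi.smul_apply, smul_eq_mul]
    rw [psi_one hα hαβ hβ, psi_zero, hbd, hc]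
    ring
  · filter_upwards [hae] with y hy hy2
    rw [hy hy2, rho_eq_zero, mul_zero, add_zero]
    rcases hy2 with h | h
    · exact fun hmem => absurd hmem.1 (not_lt.2 h.2.le)
    · exact fun hmem => absurd hmem.2 (not_lt.2 h.1.le)

/-- lower bound on `H1NormSq` via the value at `0` -/
lemma bound_at_zero (hα : 0 < α) (hαβ : α < β) (hβ : β < 1) {θ : ℝ} {u : ℝ → ℂ}
    (hu : u ∈ VSet α β θ) : α * ‖u 0‖ ^ 2 ≤ H1NormSq u := by
  obtain ⟨u', ⟨hu'2, hrep⟩, -, hae⟩ := hu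
  have hα1 : α ≤ 1 := by linarith
  have huconst : ∀ x ∈ Ioo (0:ℝ) α, u x = u 0 := by
    intro x hx
    rw [hrep x ⟨hx.1.le, hx.2.le.trans hα1⟩]
    have hz : u' =ᵐ[volume.restrict (Ioc 0 x)] 0 := by
      filter_upwards [ae_restrict_of_ae hae, ae_restrict_mem measurableSet_Ioc] with y h1 h2
      exact h1 (Or.inl ⟨h2.1, h2.2.trans_lt hx.2⟩)
    rw [intervalIntegral.integral_of_le hx.1.le, integral_congr_ae hz]
    simp
  have hII : IntervalIntegrable u' volume 0 1 :=
    intervalIntegrable_of_memL2 hu'2 (right_mem_Icc.2 zero_le_one)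
  have hcont : ContinuousOn u (Icc 0 1) := by
    have h1 : ContinuousOn (fun x => u 0 + ∫ t in (0:ℝ)..x, u' t) (Icc 0 1) := by
      apply continuousOn_const.add
      have := intervalIntegral.continuousOn_primitive_interval' hII
        (left_mem_uIcc (a := (0:ℝ)) (b := 1))
      rwa [uIcc_of_le zero_le_one] at this
    exact h1.congr fun x hx => hrep x hx
  have hint : IntegrableOn (fun y => ‖u y‖ ^ 2) (Ioo 0 1) := by
    have : ContinuousOn (fun y => ‖u y‖ ^ 2) (Icc (0:ℝ) 1) := (hcont.norm).pow 2
    exact this.integrableOn_Icc.mono_set Ioo_subset_Icc_self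
  have hstep1 : α * ‖u 0‖ ^ 2 = ∫ y in Ioo (0:ℝ) α, ‖u y‖ ^ 2 := by
    rw [setIntegral_congr_fun measurableSet_Ioo
      (g := fun _ => ‖u 0‖ ^ 2) (fun x hx => by rw [huconst x hx]),
      setIntegral_const, measureReal_def, Real.volume_Ioo, sub_zero, ENNReal.toReal_ofReal hα.le, smul_eq_mul]
  have hstep2 : (∫ y in Ioo (0:ℝ) α, ‖u y‖ ^ 2) ≤ ∫ y in Ioo (0:ℝ) 1, ‖u y‖ ^ 2 := by
    apply setIntegral_mono_set hint
    · exact Filter.Eventually.of_forall fun y => by positivity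
    · exact (Ioo_subset_Ioo_right (by linarith)).eventuallyLE
  have hstep3 : (0:ℝ) ≤ ∫ y in Ioo (0:ℝ) 1, ‖deriv u y‖ ^ 2 :=
    integral_nonneg fun y => by positivity
  rw [H1NormSq]
  linarith [hstep1, hstep2, hstep3]

lemma H1NormSq_mul_psi (hα : 0 < α) (hαβ : α < β) (hβ : β < 1) (c : ℂ) :
    H1NormSq (fun x => c * psi α β x) ≤ ‖c‖ ^ 2 * (1 + (β - α)⁻¹) := by
  have hba : (0:ℝ) < β - α := by linarith
  have hA : (∫ y in Ioo (0:ℝ) 1, ‖c * psi α β y‖ ^ 2) ≤ ‖c‖ ^ 2 := by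
    have h1 : ∀ᵐ y ∂(volume.restrict (Ioo (0:ℝ) 1)), ‖c * psi α β y‖ ^ 2 ≤ ‖c‖ ^ 2 := by
      filter_upwards [ae_restrict_mem measurableSet_Ioo] with y hy
      rw [norm_mul, mul_pow]
      have h2 : ‖psi α β y‖ ≤ 1 := norm_psi_le hαβ hy.1.le
      have h4 : ‖psi α β y‖ ^ 2 ≤ 1 := by nlinarith [norm_nonneg (psi α β y)]
      calc ‖c‖ ^ 2 * ‖psi α β y‖ ^ 2 ≤ ‖c‖ ^ 2 * 1 :=
            mul_le_mul_of_nonneg_left h4 (sq_nonneg _)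
        _ = ‖c‖ ^ 2 := mul_one _
    have h3 : (∫ y in Ioo (0:ℝ) 1, ‖c * psi α β y‖ ^ 2) ≤ ∫ _y in Ioo (0:ℝ) 1, ‖c‖ ^ 2 :=
      integral_mono_of_nonneg (Filter.Eventually.of_forall fun y => by positivity)
        (integrableOn_const measure_Ioo_lt_top.ne enorm_ne_top) h1
    calc (∫ y in Ioo (0:ℝ) 1, ‖c * psi α β y‖ ^ 2) ≤ ∫ _y in Ioo (0:ℝ) 1, ‖c‖ ^ 2 := h3
      _ = ‖c‖ ^ 2 := by
        rw [setIntegral_const, measureReal_def, Real.volume_Ioo, sub_zero, ENNReal.toReal_ofReal zero_le_one,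
          one_smul]
  have hB : (∫ y in Ioo (0:ℝ) 1, ‖deriv (fun x => c * psi α β x) y‖ ^ 2)
      = ‖c‖ ^ 2 * (β - α)⁻¹ := by
    have hsing : ∀ᵐ (y : ℝ) ∂volume, ¬(y = α ∨ y = β) := by
      rw [ae_iff]
      apply measure_mono_null (t := ({α, β} : Set ℝ)) ?_ ?_
      · intro y hy
        simp only [mem_setOf_eq, not_not] at hy
        simpa [Set.mem_insert_iff] using hy
      · rw [Set.insert_eq]
        exact measure_union_null (measure_singleton α) (measure_singleton β)
    have hderiv : ∀ᵐ y ∂(volume.restrict (Ioo (0:ℝ) 1)),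
        ‖deriv (fun x => c * psi α β x) y‖ ^ 2 = ‖c * rho α β y‖ ^ 2 := by
      filter_upwards [ae_restrict_of_ae hsing] with y hy
      push_neg at hy
      have h := (hasDerivAt_psi hαβ hy.1 hy.2).const_mul c
      rw [h.deriv]
    rw [integral_congr_ae hderiv]
    have hpt : ∀ y, ‖c * rho α β y‖ ^ 2
        = ‖c‖ ^ 2 * (Ioo α β).indicator (fun _ => ((β - α)⁻¹) ^ 2) y := by
      intro y
      rw [norm_mul, mul_pow]
      congr 1
      unfold rho
      by_cases hy : y ∈ Ioo α β
      · rw [indicator_of_mem hy, indicator_of_mem hy, Complex.norm_real, Real.norm_eq_abs,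
          abs_of_nonneg (inv_nonneg.2 hba.le)]
      · simp [indicator_of_notMem hy]
    simp_rw [hpt]
    rw [integral_const_mul, setIntegral_indicator measurableSet_Ioo]
    have hsub : Ioo (0:ℝ) 1 ∩ Ioo α β = Ioo α β :=
      inter_eq_self_of_subset_right fun y hy => ⟨hα.trans hy.1, hy.2.trans hβ⟩
    rw [hsub, setIntegral_const, measureReal_def, Real.volume_Ioo, ENNReal.toReal_ofReal hba.le, smul_eq_mul]
    field_simp
  rw [H1NormSq, hB]
  have : (0:ℝ) ≤ ‖c‖ ^ 2 * (β - α)⁻¹ := by positivity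
  nlinarith [hA]

lemma sqrt_H1_bound (hα : 0 < α) (hαβ : α < β) (hβ : β < 1) {c : ℂ} {b : ℝ}
    (hc : ‖c‖ ≤ b) :
    Real.sqrt (H1NormSq (fun x => c * psi α β x)) ≤ b * Real.sqrt (1 + (β - α)⁻¹) := by
  calc Real.sqrt (H1NormSq (fun x => c * psi α β x))
      ≤ Real.sqrt (‖c‖ ^ 2 * (1 + (β - α)⁻¹)) :=
        Real.sqrt_le_sqrt (H1NormSq_mul_psi hα hαβ hβ c)
    _ = ‖c‖ * Real.sqrt (1 + (β - α)⁻¹) := by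
        rw [Real.sqrt_mul (sq_nonneg _), Real.sqrt_sq (norm_nonneg _)]
    _ ≤ b * Real.sqrt (1 + (β - α)⁻¹) :=
        mul_le_mul_of_nonneg_right hc (Real.sqrt_nonneg _)

lemma distS_lt {A B : Set (ℝ → ℂ)} {ε : ℝ} (hε : 0 < ε)
    (h : ∀ u ∈ A, H1NormSq u = 1 → ∃ v ∈ B, Real.sqrt (H1NormSq (u - v)) ≤ ε / 2) :
    distS A B < ε := by
  have hle : distS A B ≤ ε / 2 := by
    apply Real.sSup_le ?_ (by linarith)
    rintro r ⟨u, huA, hnorm, rfl⟩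
    obtain ⟨v, hvB, hlev⟩ := h u huA hnorm
    have hmem : Real.sqrt (H1NormSq (u - v))
        ∈ {s | ∃ v ∈ B, s = Real.sqrt (H1NormSq (u - v))} := ⟨v, hvB, rfl⟩
    have hbdd : BddBelow {s | ∃ v ∈ B, s = Real.sqrt (H1NormSq (u - v))} :=
      ⟨0, by rintro s ⟨w, -, rfl⟩; exact Real.sqrt_nonneg _⟩
    exact le_trans (csInf_le hbdd hmem) hlev
  linarith

end Stmt15Aux

theorem stmt_15 (α β : ℝ) (hα : 0 < α) (hαβ : α < β) (hβ : β < 1)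
    (θ₁ : ℝ) (hθ₁ : θ₁ ∈ Ico (0:ℝ) 1) (k : ℕ) (hk : 1 ≤ k)
    (F₁ : Submodule ℂ (ℝ → ℂ)) (hF₁ : (F₁ : Set (ℝ → ℂ)) ⊆ VSet α β θ₁)
    (hdim : Module.finrank ℂ F₁ = k) :
    ∀ ε > (0:ℝ), ∃ δ > (0:ℝ), ∀ θ₂ ∈ Ico (0:ℝ) 1, |θ₂ - θ₁| ≤ δ →
      ∃ F₂ : Submodule ℂ (ℝ → ℂ), (F₂ : Set (ℝ → ℂ)) ⊆ VSet α β θ₂ ∧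
        Module.finrank ℂ F₂ = k ∧
        max (distS (F₁ : Set (ℝ → ℂ)) (F₂ : Set (ℝ → ℂ)))
            (distS (F₂ : Set (ℝ → ℂ)) (F₁ : Set (ℝ → ℂ))) < ε := by
  intro ε hε
  have hba : (0:ℝ) < β - α := by linarith
  have hπ := Real.pi_pos
  set M : ℝ := Real.sqrt α⁻¹ * Real.sqrt (1 + (β - α)⁻¹) with hM
  have hM0 : 0 ≤ M := mul_nonneg (Real.sqrt_nonneg _) (Real.sqrt_nonneg _)
  set δ : ℝ := min ((4 * Real.pi)⁻¹) (ε / (8 * Real.pi * (M + 1))) with hδdef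
  have hδpos : 0 < δ := lt_min (by positivity) (by positivity)
  refine ⟨δ, hδpos, ?_⟩
  intro θ₂ hθ₂ hclose
  set γ : ℂ := Complex.exp (2 * Real.pi * Complex.I * θ₂) -
      Complex.exp (2 * Real.pi * Complex.I * θ₁) with hγdef
  -- bound on ‖γ‖
  have hw : ‖(2 * Real.pi * Complex.I * ((θ₂ : ℂ) - θ₁))‖ = 2 * Real.pi * |θ₂ - θ₁| := by
    have h1 : (2 * Real.pi * Complex.I * ((θ₂ : ℂ) - θ₁))
        = (((2 * Real.pi * (θ₂ - θ₁) : ℝ)) : ℂ) * Complex.I := by push_cast; ring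
    rw [h1, norm_mul, Complex.norm_I,
      Complex.norm_real, Real.norm_eq_abs, mul_one, abs_mul, abs_of_pos (by positivity : (0:ℝ) < 2 * Real.pi)]
  have hwle : 2 * Real.pi * |θ₂ - θ₁| ≤ 1 := by
    have h1 : |θ₂ - θ₁| ≤ (4 * Real.pi)⁻¹ := hclose.trans (min_le_left _ _)
    have h2 : 2 * Real.pi * (4 * Real.pi)⁻¹ = 1 / 2 := by field_simp; ring
    nlinarith [abs_nonneg (θ₂ - θ₁)]
  have hγnorm : ‖γ‖ ≤ 4 * Real.pi * δ := by
    have hfact : γ = Complex.exp (2 * Real.pi * Complex.I * θ₁) *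
        (Complex.exp (2 * Real.pi * Complex.I * ((θ₂ : ℂ) - θ₁)) - 1) := by
      rw [hγdef, mul_sub, mul_one, ← Complex.exp_add]
      congr 2
      push_cast; ring
    have h1 : ‖Complex.exp (2 * Real.pi * Complex.I * (θ₁ : ℂ))‖ = 1 := by
      have h2 : (2 * Real.pi * Complex.I * (θ₁ : ℂ))
          = (((2 * Real.pi * θ₁ : ℝ)) : ℂ) * Complex.I := by push_cast; ring
      rw [h2, Complex.norm_exp_ofReal_mul_I]
    have h2 : ‖Complex.exp (2 * Real.pi * Complex.I * ((θ₂ : ℂ) - θ₁)) - 1‖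
        ≤ 2 * ‖(2 * Real.pi * Complex.I * ((θ₂ : ℂ) - θ₁))‖ := by
      apply Complex.norm_exp_sub_one_le
      rw [hw]
      exact hwle
    rw [hfact, norm_mul, h1, one_mul]
    rw [hw] at h2
    have h3 : |θ₂ - θ₁| ≤ δ := hclose
    nlinarith [h2]
  -- the correction map
  let T : (ℝ → ℂ) →ₗ[ℂ] (ℝ → ℂ) :=
    { toFun := fun u => u + (γ * u 0) • Stmt15Aux.psi α β
      map_add' := by
        intro u v; funext x
        simp only [Pi.add_apply, Pi.smul_apply, smul_eq_mul]
        ring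
      map_smul' := by
        intro a u; funext x
        simp only [Pi.add_apply, Pi.smul_apply, smul_eq_mul, RingHom.id_apply]
        ring }
  have hT : ∀ u : ℝ → ℂ, T u = u + (γ * u 0) • Stmt15Aux.psi α β := fun u => rfl
  have hTinj : Function.Injective T := by
    rw [injective_iff_map_eq_zero]
    intro u hu
    have h0 : u 0 = 0 := by
      have h := congrFun hu 0
      simp only [hT, Pi.add_apply, Pi.smul_apply, smul_eq_mul, Stmt15Aux.psi_zero, mul_zero,
        add_zero, Pi.zero_apply] at h
      exact h
    funext x
    have h := congrFun hu x
    simp only [hT, Pi.add_apply, Pi.smul_apply, smul_eq_mul, h0, mul_zero, zero_mul,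
      add_zero, Pi.zero_apply] at h
    exact h
  have hmap : ∀ u : ℝ → ℂ, u ∈ VSet α β θ₁ → T u ∈ VSet α β θ₂ := by
    intro u hu
    have := Stmt15Aux.mem_VSet_map hα hαβ hβ θ₁ θ₂ hu
    rw [hT u, hγdef]
    exact this
  refine ⟨F₁.map T, ?_, ?_, ?_⟩
  · rintro v hv
    rcases Submodule.mem_map.1 hv with ⟨u, hu, rfl⟩
    exact hmap u (hF₁ hu)
  · rw [← hdim]
    exact ((Submodule.equivMapOfInjective T hTinj F₁).finrank_eq).symm
  · -- the distance bound
    have hδ2 : δ ≤ ε / (8 * Real.pi * (M + 1)) := min_le_right _ _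
    have hMbound : ∀ c : ℂ, ‖c‖ ≤ ‖γ‖ * Real.sqrt α⁻¹ →
        Real.sqrt (H1NormSq (fun x => c * Stmt15Aux.psi α β x)) ≤ ε / 2 := by
      intro c hc
      have h1 := Stmt15Aux.sqrt_H1_bound hα hαβ hβ (c := c) (b := ‖γ‖ * Real.sqrt α⁻¹) hc
      have h2 : ‖γ‖ * Real.sqrt α⁻¹ * Real.sqrt (1 + (β - α)⁻¹) = ‖γ‖ * M := by
        rw [hM]; ring
      rw [h2] at h1
      have h3 : ‖γ‖ * M ≤ (4 * Real.pi * δ) * M := mul_le_mul_of_nonneg_right hγnorm hM0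
      have h5 : (4 * Real.pi) * (ε / (8 * Real.pi * (M + 1))) * (M + 1) = ε / 2 := by
        field_simp
        ring
      have h4 : (4 * Real.pi * δ) * M ≤ (4 * Real.pi) * (ε / (8 * Real.pi * (M + 1))) * (M + 1) := by
        have hD : 0 < ε / (8 * Real.pi * (M + 1)) := by positivity
        have h6 : 0 ≤ (ε / (8 * Real.pi * (M + 1)) - δ) * M :=
          mul_nonneg (by linarith) hM0
        nlinarith [h6, hD, hπ]
      linarith
    have hu0 : ∀ (θ : ℝ) (u : ℝ → ℂ), u ∈ VSet α β θ → H1NormSq u = 1 →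
        ‖u 0‖ ≤ Real.sqrt α⁻¹ := by
      intro θ u hu hn
      have h := Stmt15Aux.bound_at_zero hα hαβ hβ hu
      rw [hn] at h
      have haa : α * α⁻¹ = 1 := mul_inv_cancel₀ hα.ne'
      have h2 : ‖u 0‖ ^ 2 ≤ α⁻¹ := by nlinarith [h, haa, hα, sq_nonneg (‖u 0‖)]
      calc ‖u 0‖ = Real.sqrt (‖u 0‖ ^ 2) := (Real.sqrt_sq (norm_nonneg _)).symm
        _ ≤ Real.sqrt α⁻¹ := Real.sqrt_le_sqrt h2
    rw [max_lt_iff]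
    constructor
    · apply Stmt15Aux.distS_lt hε
      intro u huF hn
      refine ⟨T u, Submodule.mem_map_of_mem huF, ?_⟩
      have hdiff : u - T u = fun x => (-(γ * u 0)) * Stmt15Aux.psi α β x := by
        funext x
        simp only [Pi.sub_apply, hT, Pi.add_apply, Pi.smul_apply, smul_eq_mul]
        ring
      rw [hdiff]
      apply hMbound
      rw [norm_neg, norm_mul]
      exact mul_le_mul_of_nonneg_left (hu0 θ₁ u (hF₁ huF) hn) (norm_nonneg γ)
    · apply Stmt15Aux.distS_lt hε
      intro u hu hn
      rcases Submodule.mem_map.1 hu with ⟨w, hwF, rfl⟩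
      refine ⟨w, hwF, ?_⟩
      have hw0 : (T w) 0 = w 0 := by
        simp only [hT, Pi.add_apply, Pi.smul_apply, smul_eq_mul, Stmt15Aux.psi_zero, mul_zero,
          add_zero]
      have hdiff : T w - w = fun x => (γ * w 0) * Stmt15Aux.psi α β x := by
        funext x
        simp only [Pi.sub_apply, hT, Pi.add_apply, Pi.smul_apply, smul_eq_mul]
        ring
      rw [hdiff]
      apply hMbound
      rw [norm_mul]
      have hVu : T w ∈ VSet α β θ₂ := hmap w (hF₁ hwF)
      have h := hu0 θ₂ (T w) hVu hn
      rw [hw0] at h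
      exact mul_le_mul_of_nonneg_left h (norm_nonneg γ)

end
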